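/- Let F be an index set with supp(x̄) ⊆ F and |F| = s. Then the eigenvalues λ_1(A_F) ≥ λ_2(A_F) ≥ … of the principal submatrix A_F satisfy: λ_1(A_F) ≥ λ - ρ(E,s), and |λ_j(A_F)| ≤ λ - Δλ + ρ(E,s) for every j ≥ 2. -/

import Mathlib

open scoped InnerProductSpace
set_option linter.unusedSectionVars false
set_option maxHeartbeats 1000000

namespace TPaper

noncomputable def nrm2 {p : ℕ} (x : Fin p → ℝ) : ℝ := Real.sqrt (∑ i, x i ^ 2)

def dotp {p : ℕ} (x y : Fin p → ℝ) : ℝ := ∑ i, x i * y i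

noncomputable def supp {p : ℕ} (x : Fin p → ℝ) : Finset (Fin p) :=
  Finset.univ.filter fun i => x i ≠ 0

def subm {p : ℕ} (A : Matrix (Fin p) (Fin p) ℝ) (F : Finset (Fin p)) :
    Matrix {i // i ∈ F} {i // i ∈ F} ℝ :=
  A.submatrix Subtype.val Subtype.val

noncomputable def specNorm {n : Type*} [Fintype n] [DecidableEq n]
    (B : Matrix n n ℝ) : ℝ :=
  sSup {r : ℝ | ∃ μ ∈ spectrum ℝ B, r = |μ|}

noncomputable def rhoRes {p : ℕ} (E : Matrix (Fin p) (Fin p) ℝ) (s : ℕ) : ℝ :=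
  sSup {r : ℝ | ∃ F : Finset (Fin p), F.card = s ∧ r = specNorm (subm E F)}

def Trunc {p : ℕ} (x : Fin p → ℝ) (F : Finset (Fin p)) : Fin p → ℝ :=
  fun i => if i ∈ F then x i else 0

def IsTopK {p : ℕ} (y : Fin p → ℝ) (k : ℕ) (F : Finset (Fin p)) : Prop :=
  F.card = k ∧ ∀ i ∈ F, ∀ j ∉ F, |y j| ≤ |y i|

noncomputable def maxEig {n : Type*} [Fintype n] [DecidableEq n]
    (B : Matrix n n ℝ) : ℝ :=
  sSup (spectrum ℝ B)

noncomputable def eigList {n : Type*} [Fintype n] [DecidableEq n] {B : Matrix n n ℝ}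
    (hB : B.IsHermitian) : List ℝ :=
  ((Finset.univ.val.map hB.eigenvalues).sort (· ≤ ·)).reverse

/-! ### Auxiliary lemmas -/

section Helpers
variable {n : Type*} [Fintype n] [DecidableEq n] {B : Matrix n n ℝ}

lemma inner_pi (x y : EuclideanSpace ℝ n) : ⟪x, y⟫_ℝ = ∑ i, x i * y i := by
  simp [PiLp.inner_apply, RCLike.inner_apply]
  exact Finset.sum_congr rfl fun i _ => mul_comm _ _

lemma repr_parseval (b : OrthonormalBasis n ℝ (EuclideanSpace ℝ n)) (x y : EuclideanSpace ℝ n) :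
    ∑ i, b.repr x i * b.repr y i = ∑ i, x i * y i := by
  have h := b.repr.inner_map_map x y
  rw [inner_pi, inner_pi] at h
  exact h

lemma repr_apply (b : OrthonormalBasis n ℝ (EuclideanSpace ℝ n)) (x : EuclideanSpace ℝ n) (i : n) :
    b.repr x i = ∑ k, b i k * x k := by
  rw [b.repr_apply_apply, inner_pi]

lemma quad_repr (hB : B.IsHermitian) (v : EuclideanSpace ℝ n) :
    ⟪v, WithLp.toLp 2 (B.mulVec v)⟫_ℝ =
      ∑ i, hB.eigenvalues i * (hB.eigenvectorBasis.repr v i)^2 := by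
  set b := hB.eigenvectorBasis with hb
  set c : n → ℝ := fun i => b.repr v i with hc
  set T := Matrix.toEuclideanLin B with hT
  have hTv : WithLp.toLp 2 (B.mulVec v) = T v := rfl
  have hTb : ∀ i, T (b i) = hB.eigenvalues i • b i := by
    intro i
    have := hB.mulVec_eigenvectorBasis i
    apply (WithLp.equiv 2 (n → ℝ)).injective
    simpa [Matrix.ofLp_toEuclideanLin_apply, T, b] using this
  have hv : v = ∑ i, c i • b i := (b.sum_repr v).symm
  rw [hTv]
  conv_lhs => rw [hv, map_sum]
  simp only [map_smul, hTb]
  rw [sum_inner]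
  simp only [inner_sum, real_inner_smul_left, real_inner_smul_right]
  have horth := b.orthonormal
  rw [orthonormal_iff_ite] at horth
  simp only [horth]
  simp [Finset.mul_sum, Finset.sum_ite_eq, mul_ite]
  exact Finset.sum_congr rfl fun i _ => by ring

lemma quad_eq (hB : B.IsHermitian) (v : n → ℝ) :
    ∑ i, v i * B.mulVec v i =
      ∑ i, hB.eigenvalues i * (hB.eigenvectorBasis.repr (WithLp.toLp 2 v) i)^2 := by
  have h := quad_repr hB (WithLp.toLp 2 v)
  rw [inner_pi] at h
  exact h

lemma parseval_sq (b : OrthonormalBasis n ℝ (EuclideanSpace ℝ n)) (v : n → ℝ) :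
    ∑ i, (b.repr (WithLp.toLp 2 v) i)^2 = ∑ i, (v i)^2 := by
  have h := repr_parseval b (WithLp.toLp 2 v) (WithLp.toLp 2 v)
  simpa [pow_two] using h

lemma abs_eig_le_specNorm (hB : B.IsHermitian) (i : n) :
    |hB.eigenvalues i| ≤ specNorm B := by
  apply le_csSup
  · have h : {r : ℝ | ∃ μ ∈ spectrum ℝ B, r = |μ|} = abs '' (spectrum ℝ B) := by
      ext r; simp [Set.mem_image, eq_comm]
    rw [h]
    exact ((B.finite_spectrum).image _).bddAbove
  · exact ⟨_, hB.eigenvalues_mem_spectrum_real i, rfl⟩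

lemma exists_eig_ge (hB : B.IsHermitian) (v : n → ℝ) (hv : ∑ i, v i ^ 2 = 1) :
    ∃ j, ∑ i, v i * B.mulVec v i ≤ hB.eigenvalues j := by
  have hne : Nonempty n := by
    by_contra h
    rw [not_nonempty_iff] at h
    rw [Finset.univ_eq_empty, Finset.sum_empty] at hv
    norm_num at hv
  obtain ⟨j, _, hj⟩ := Finset.exists_max_image Finset.univ hB.eigenvalues
    ⟨Classical.arbitrary n, Finset.mem_univ _⟩
  refine ⟨j, ?_⟩
  rw [quad_eq hB]
  calc ∑ i, hB.eigenvalues i * (hB.eigenvectorBasis.repr (WithLp.toLp 2 v) i)^2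
      ≤ ∑ i, hB.eigenvalues j * (hB.eigenvectorBasis.repr (WithLp.toLp 2 v) i)^2 :=
        Finset.sum_le_sum fun i _ =>
          mul_le_mul_of_nonneg_right (hj i (Finset.mem_univ _)) (sq_nonneg _)
    _ = hB.eigenvalues j * ∑ i, (hB.eigenvectorBasis.repr (WithLp.toLp 2 v) i)^2 := by rw [Finset.mul_sum]
    _ = hB.eigenvalues j := by rw [parseval_sq, hv, mul_one]

lemma quad_ge (hB : B.IsHermitian) (m : ℝ) (hm : ∀ i, m ≤ hB.eigenvalues i) (v : n → ℝ) :
    m * ∑ i, v i ^ 2 ≤ ∑ i, v i * B.mulVec v i := by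
  rw [quad_eq hB, ← parseval_sq hB.eigenvectorBasis v, Finset.mul_sum]
  exact Finset.sum_le_sum fun i _ => mul_le_mul_of_nonneg_right (hm i) (sq_nonneg _)

lemma abs_quad_le (hB : B.IsHermitian) (v : n → ℝ) :
    |∑ i, v i * B.mulVec v i| ≤ specNorm B * ∑ i, v i ^ 2 := by
  rw [quad_eq hB, ← parseval_sq hB.eigenvectorBasis v, Finset.mul_sum]
  calc |∑ i, hB.eigenvalues i * (hB.eigenvectorBasis.repr (WithLp.toLp 2 v) i)^2|
      ≤ ∑ i, |hB.eigenvalues i * (hB.eigenvectorBasis.repr (WithLp.toLp 2 v) i)^2| :=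
        Finset.abs_sum_le_sum_abs _ _
    _ ≤ ∑ i, specNorm B * (hB.eigenvectorBasis.repr (WithLp.toLp 2 v) i)^2 := by
        refine Finset.sum_le_sum fun i _ => ?_
        rw [abs_mul, abs_of_nonneg (sq_nonneg (hB.eigenvectorBasis.repr (WithLp.toLp 2 v) i))]
        exact mul_le_mul_of_nonneg_right (abs_eig_le_specNorm hB i) (sq_nonneg _)

lemma sum_combo2 (u u' z z' : n → ℝ) (a c a' c' : ℝ) :
    ∑ k, (a * u k + c * u' k) * (a' * z k + c' * z' k) =
      a*a' * ∑ k, u k * z k + a*c' * ∑ k, u k * z' k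
        + c*a' * ∑ k, u' k * z k + c*c' * ∑ k, u' k * z' k := by
  have h : ∀ k, (a * u k + c * u' k) * (a' * z k + c' * z' k)
      = a*a' * (u k * z k) + a*c' * (u k * z' k) + c*a' * (u' k * z k) + c*c' * (u' k * z' k) :=
    fun k => by ring
  simp_rw [h, Finset.sum_add_distrib, ← Finset.mul_sum]

lemma exists_orth_combo (hB : B.IsHermitian) (i j : n) (hij : i ≠ j) (v : n → ℝ) :
    ∃ w : n → ℝ, (∑ k, w k ^ 2 = 1) ∧ (∑ k, w k * v k = 0) ∧
      min (hB.eigenvalues i) (hB.eigenvalues j) ≤ ∑ k, w k * B.mulVec w k := by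
  set b := hB.eigenvectorBasis with hb
  set u : n → ℝ := ⇑(b i) with hu
  set u' : n → ℝ := ⇑(b j) with hu'
  have horth := b.orthonormal
  rw [orthonormal_iff_ite] at horth
  have huu : ∑ k, u k * u k = 1 := by
    have := horth i i; rw [inner_pi] at this; simpa using this
  have huu' : ∑ k, u k * u' k = 0 := by
    have := horth i j; rw [inner_pi] at this; simpa [hij] using this
  have hu'u : ∑ k, u' k * u k = 0 := by
    simpa [mul_comm] using huu'
  have hu'u' : ∑ k, u' k * u' k = 1 := by
    have := horth j j; rw [inner_pi] at this; simpa using this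
  have hBu : B.mulVec u = fun k => hB.eigenvalues i * u k := by
    funext k
    have h2 := congrFun (hB.mulVec_eigenvectorBasis i) k
    simpa using h2
  have hBu' : B.mulVec u' = fun k => hB.eigenvalues j * u' k := by
    funext k
    have h2 := congrFun (hB.mulVec_eigenvectorBasis j) k
    simpa using h2
  set α := ∑ k, u k * v k with hα
  set β := ∑ k, u' k * v k with hβ
  have key : ∀ a c : ℝ, a^2 + c^2 = 1 → a*α + c*β = 0 →
      ∃ w : n → ℝ, (∑ k, w k ^ 2 = 1) ∧ (∑ k, w k * v k = 0) ∧
      min (hB.eigenvalues i) (hB.eigenvalues j) ≤ ∑ k, w k * B.mulVec w k := by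
    intro a c h1 h2
    refine ⟨fun k => a * u k + c * u' k, ?_, ?_, ?_⟩
    · have := sum_combo2 u u' u u' a c a c
      simp_rw [pow_two]
      rw [this, huu, huu', hu'u, hu'u']
      nlinarith [h1]
    · calc ∑ k, (a * u k + c * u' k) * v k
          = ∑ k, (a * u k + c * u' k) * (1 * v k + 0 * (0:ℝ)) := by
            refine Finset.sum_congr rfl fun k _ => by ring
        _ = a*1 * ∑ k, u k * v k + a*0 * ∑ k, u k * (0:ℝ)
            + c*1 * ∑ k, u' k * v k + c*0 * ∑ k, u' k * (0:ℝ) :=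
            sum_combo2 u u' v (fun _ => (0:ℝ)) a c 1 0
        _ = a * α + c * β := by rw [← hα, ← hβ]; ring
        _ = 0 := h2
    · have hmul : B.mulVec (fun k => a * u k + c * u' k)
          = fun k => a * (hB.eigenvalues i * u k) + c * (hB.eigenvalues j * u' k) := by
        have hw : (fun k => a * u k + c * u' k) = a • u + c • u' := by
          funext k; simp [Pi.smul_apply, smul_eq_mul]
        rw [hw, Matrix.mulVec_add, Matrix.mulVec_smul, Matrix.mulVec_smul, hBu, hBu']
        funext k; simp [Pi.smul_apply, smul_eq_mul]
      rw [hmul, sum_combo2 u u' (fun k => hB.eigenvalues i * u k)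
        (fun k => hB.eigenvalues j * u' k) a c a c]
      have e1 : ∑ k, u k * (hB.eigenvalues i * u k) = hB.eigenvalues i := by
        simp_rw [mul_left_comm]
        rw [← Finset.mul_sum, huu, mul_one]
      have e2 : ∑ k, u k * (hB.eigenvalues j * u' k) = 0 := by
        simp_rw [mul_left_comm]
        rw [← Finset.mul_sum, huu', mul_zero]
      have e3 : ∑ k, u' k * (hB.eigenvalues i * u k) = 0 := by
        simp_rw [mul_left_comm]
        rw [← Finset.mul_sum, hu'u, mul_zero]
      have e4 : ∑ k, u' k * (hB.eigenvalues j * u' k) = hB.eigenvalues j := by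
        simp_rw [mul_left_comm]
        rw [← Finset.mul_sum, hu'u', mul_one]
      rw [e1, e2, e3, e4]
      have hmin1 : min (hB.eigenvalues i) (hB.eigenvalues j) ≤ hB.eigenvalues i := min_le_left _ _
      have hmin2 : min (hB.eigenvalues i) (hB.eigenvalues j) ≤ hB.eigenvalues j := min_le_right _ _
      set m := min (hB.eigenvalues i) (hB.eigenvalues j) with hm
      have hge : a*a*m + c*c*m ≤ a*a*(hB.eigenvalues i) + c*c*(hB.eigenvalues j) :=
        add_le_add (mul_le_mul_of_nonneg_left hmin1 (mul_self_nonneg a))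
          (mul_le_mul_of_nonneg_left hmin2 (mul_self_nonneg c))
      calc m = (a^2 + c^2) * m := by rw [h1, one_mul]
        _ = a*a*m + c*c*m := by ring
        _ ≤ a*a*(hB.eigenvalues i) + c*c*(hB.eigenvalues j) := hge
        _ = a*a*(hB.eigenvalues i) + a*c*0 + c*a*0 + c*c*(hB.eigenvalues j) := by ring
  by_cases hz : α = 0 ∧ β = 0
  · exact key 1 0 (by norm_num) (by rw [hz.1, hz.2]; ring)
  · have hs : 0 < Real.sqrt (α^2 + β^2) := by
      apply Real.sqrt_pos.mpr
      rcases not_and_or.mp hz with h | h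
      · positivity
      · positivity
    have hs2 : Real.sqrt (α^2 + β^2) ^ 2 = α^2 + β^2 := Real.sq_sqrt (by positivity)
    have hpos : 0 < α^2 + β^2 := Real.sqrt_pos.mp hs
    refine key (-β / Real.sqrt (α^2+β^2)) (α / Real.sqrt (α^2+β^2)) ?_ ?_
    · have hrr : (-β / Real.sqrt (α^2+β^2))^2 + (α / Real.sqrt (α^2+β^2))^2
          = (α^2+β^2) / (Real.sqrt (α^2+β^2))^2 := by ring
      rw [hrr, hs2, div_self (ne_of_gt hpos)]
    · field_simp; ring

variable (hB : B.IsHermitian)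

lemma eigList_coe : ((eigList hB : List ℝ) : Multiset ℝ)
    = Multiset.map hB.eigenvalues Finset.univ.val := by
  unfold eigList
  rw [Multiset.coe_reverse, Multiset.sort_eq]

lemma mem_eigList {r : ℝ} : r ∈ eigList hB ↔ ∃ i, hB.eigenvalues i = r := by
  rw [← Multiset.mem_coe, eigList_coe, Multiset.mem_map]
  simp

lemma eigList_sorted : (eigList hB).Pairwise (fun a b : ℝ => b ≤ a) := by
  unfold eigList
  exact List.pairwise_reverse.mpr (Multiset.pairwise_sort _ _)

lemma le_headI {r : ℝ} (hr : r ∈ eigList hB) : r ≤ (eigList hB).headI := by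
  have hne : eigList hB ≠ [] := by intro h; rw [h] at hr; simp at hr
  obtain ⟨a, t, ht⟩ := List.exists_cons_of_ne_nil hne
  have hs := eigList_sorted hB
  rw [ht] at hr hs ⊢
  simp only [List.headI]
  rcases List.mem_cons.mp hr with h | h
  · exact h.le
  · exact (List.pairwise_cons.mp hs).1 r h

lemma tail_pair {r : ℝ} (hr : r ∈ (eigList hB).tail) :
    ∃ i j, i ≠ j ∧ hB.eigenvalues i = (eigList hB).headI ∧ hB.eigenvalues j = r := by
  have hne : eigList hB ≠ [] := by
    intro h; rw [h] at hr; simp at hr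
  obtain ⟨a, t, ht⟩ := List.exists_cons_of_ne_nil hne
  have hcoe := eigList_coe hB
  rw [ht] at hcoe hr
  simp only [List.tail_cons] at hr
  have hhead : (eigList hB).headI = a := by rw [ht]; rfl
  rw [hhead]
  have hcons : Multiset.map hB.eigenvalues Finset.univ.val = a ::ₘ (t : Multiset ℝ) := by
    rw [← hcoe]; rfl
  obtain ⟨i, hi_mem, hi, hmap⟩ := (Multiset.map_eq_cons _ _ _ _).mpr hcons
  have hr' : r ∈ Multiset.map hB.eigenvalues (Finset.univ.val.erase i) := by
    rw [hmap]; exact hr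
  obtain ⟨j, hj_mem, hj⟩ := Multiset.mem_map.mp hr'
  refine ⟨i, j, ?_, hi, hj⟩
  intro hij
  rw [← hij] at hj_mem
  exact Finset.univ.nodup.notMem_erase hj_mem

end Helpers

section Ext
variable {p : ℕ} (F : Finset (Fin p))

lemma specNorm_subm_le_rhoRes (E : Matrix (Fin p) (Fin p) ℝ) (s : ℕ)
    (h : F.card = s) : specNorm (subm E F) ≤ rhoRes E s := by
  apply le_csSup
  · have hsub : {r : ℝ | ∃ F : Finset (Fin p), F.card = s ∧ r = specNorm (subm E F)}
        ⊆ Set.range (fun F : Finset (Fin p) => specNorm (subm E F)) := by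
      rintro r ⟨F', _, rfl⟩; exact ⟨F', rfl⟩
    exact (Set.finite_range _).subset hsub |>.bddAbove
  · exact ⟨F, h, rfl⟩

def extF (w : {i // i ∈ F} → ℝ) : Fin p → ℝ := fun k => if h : k ∈ F then w ⟨k, h⟩ else 0

lemma extF_val (w : {i // i ∈ F} → ℝ) (i : {i // i ∈ F}) : extF F w i.val = w i := by
  simp [extF, i.2]

lemma sum_ext (g : Fin p → ℝ) (w : {i // i ∈ F} → ℝ) :
    ∑ k, g k * extF F w k = ∑ i : {i // i ∈ F}, g i.val * w i := by
  rw [← Finset.sum_subset (Finset.subset_univ F)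
    (fun k _ hk => by simp [extF, hk])]
  rw [← Finset.sum_coe_sort F (fun k => g k * extF F w k)]
  exact Finset.sum_congr rfl fun i _ => by rw [extF_val]

lemma sum_ext_mul (w w' : {i // i ∈ F} → ℝ) :
    ∑ k, extF F w k * extF F w' k = ∑ i, w i * w' i := by
  rw [sum_ext F (extF F w) w']
  exact Finset.sum_congr rfl fun i _ => by rw [extF_val]

lemma quad_subm (M : Matrix (Fin p) (Fin p) ℝ) (w : {i // i ∈ F} → ℝ) :
    ∑ i, w i * (M.submatrix (Subtype.val : {i // i ∈ F} → Fin p) Subtype.val).mulVec w i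
      = ∑ k, extF F w k * M.mulVec (extF F w) k := by
  have hmv : ∀ i : {i // i ∈ F},
      (M.submatrix (Subtype.val : {i // i ∈ F} → Fin p) Subtype.val).mulVec w i
        = M.mulVec (extF F w) i.val := by
    intro i
    show ∑ j, M.submatrix Subtype.val Subtype.val i j * w j = ∑ k, M i.val k * extF F w k
    rw [sum_ext F (M i.val) w]
    rfl
  calc ∑ i, w i * (M.submatrix (Subtype.val : {i // i ∈ F} → Fin p) Subtype.val).mulVec w i
      = ∑ i : {i // i ∈ F}, M.mulVec (extF F w) i.val * w i := by
        refine Finset.sum_congr rfl fun i _ => ?_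
        rw [hmv i, mul_comm]
    _ = ∑ k, M.mulVec (extF F w) k * extF F w k := (sum_ext F _ w).symm
    _ = ∑ k, extF F w k * M.mulVec (extF F w) k := by
        exact Finset.sum_congr rfl fun k _ => mul_comm _ _

lemma sym_swap {A : Matrix (Fin p) (Fin p) ℝ} (hA : A.IsHermitian)
    (u x : Fin p → ℝ) :
    ∑ k, u k * A.mulVec x k = ∑ m, A.mulVec u m * x m := by
  have hsym : ∀ a b, A a b = A b a := by
    intro a b
    conv_lhs => rw [← hA]
    simp [Matrix.conjTranspose_apply]
  calc ∑ k, u k * A.mulVec x k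
      = ∑ k, ∑ m, u k * (A k m * x m) := by
        simp [Matrix.mulVec, dotProduct, Finset.mul_sum]
    _ = ∑ m, ∑ k, u k * (A k m * x m) := Finset.sum_comm
    _ = ∑ m, A.mulVec u m * x m := by
        refine Finset.sum_congr rfl fun m _ => ?_
        show _ = (∑ k, A m k * u k) * x m
        rw [Finset.sum_mul]
        refine Finset.sum_congr rfl fun k _ => ?_
        rw [hsym m k]; ring

lemma key_orth {Abar : Matrix (Fin p) (Fin p) ℝ} (hAbar : Abar.IsHermitian)
    {lam dlam : ℝ} {i0 : Fin p}
    (hdlam_pos : 0 < dlam)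
    (hgap_le : ∀ j, j ≠ i0 → |hAbar.eigenvalues j| ≤ lam - dlam)
    {xbar : Fin p → ℝ} (hxbar_eig : Abar.mulVec xbar = lam • xbar)
    (hxnorm : ∑ k, xbar k ^ 2 = 1)
    (y : Fin p → ℝ) (hy : ∑ k, y k * xbar k = 0) :
    ∑ k, y k * Abar.mulVec y k ≤ (lam - dlam) * ∑ k, y k ^ 2 := by
  set b := hAbar.eigenvectorBasis with hb
  have hdj : ∀ j, j ≠ i0 → b.repr (WithLp.toLp 2 xbar) j = 0 := by
    intro j hj
    have hev : hAbar.eigenvalues j ≠ lam := by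
      have h2 : hAbar.eigenvalues j ≤ lam - dlam := (abs_le.mp (hgap_le j hj)).2
      intro h; rw [h] at h2; linarith
    have h1 : ∑ k, b j k * Abar.mulVec xbar k = lam * b.repr (WithLp.toLp 2 xbar) j := by
      rw [hxbar_eig]
      have he : ∀ k, b j k * (lam • xbar) k = lam * (b j k * xbar k) := by
        intro k; simp [Pi.smul_apply, smul_eq_mul]; ring
      simp_rw [he]
      rw [← Finset.mul_sum, repr_apply]
    have h2 : ∑ k, b j k * Abar.mulVec xbar k = hAbar.eigenvalues j * b.repr (WithLp.toLp 2 xbar) j := by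
      rw [sym_swap hAbar]
      have hbB : ∀ m, Abar.mulVec (⇑(b j)) m = hAbar.eigenvalues j * b j m := by
        intro m
        have := congrFun (hAbar.mulVec_eigenvectorBasis j) m
        simpa using this
      calc ∑ m, Abar.mulVec (⇑(b j)) m * xbar m
          = ∑ m, hAbar.eigenvalues j * (b j m * xbar m) := by
            refine Finset.sum_congr rfl fun m _ => ?_
            rw [hbB m]; ring
        _ = hAbar.eigenvalues j * b.repr (WithLp.toLp 2 xbar) j := by rw [← Finset.mul_sum, repr_apply]
    have h3 : (lam - hAbar.eigenvalues j) * b.repr (WithLp.toLp 2 xbar) j = 0 := by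
      rw [sub_mul]
      rw [h1] at h2
      linarith [h2]
    rcases mul_eq_zero.mp h3 with h | h
    · exfalso; exact hev (by linarith [sub_eq_zero.mp h])
    · exact h
  have hdi0 : b.repr (WithLp.toLp 2 xbar) i0 ≠ 0 := by
    intro h0
    have hz : ∑ j, (b.repr (WithLp.toLp 2 xbar) j)^2 = 0 := Finset.sum_eq_zero (fun j _ => by
      by_cases hji : j = i0
      · rw [hji, h0]; ring
      · rw [hdj j hji]; ring)
    have hp := parseval_sq b xbar
    rw [hz, hxnorm] at hp
    norm_num at hp
  have hci0 : b.repr (WithLp.toLp 2 y) i0 = 0 := by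
    have hps := repr_parseval b (WithLp.toLp 2 y) (WithLp.toLp 2 xbar)
    rw [hy] at hps
    have hsingle : ∑ j, b.repr (WithLp.toLp 2 y) j * b.repr (WithLp.toLp 2 xbar) j = b.repr (WithLp.toLp 2 y) i0 * b.repr (WithLp.toLp 2 xbar) i0 :=
      Finset.sum_eq_single i0 (fun j _ hj => by rw [hdj j hj, mul_zero]) (by simp)
    rw [hsingle] at hps
    rcases mul_eq_zero.mp hps with h | h
    · exact h
    · exact absurd h hdi0
  rw [quad_eq hAbar, ← parseval_sq b y, Finset.mul_sum]
  refine Finset.sum_le_sum fun j _ => ?_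
  by_cases hji : j = i0
  · rw [hji, hci0]
    simp
  · exact mul_le_mul_of_nonneg_right ((abs_le.mp (hgap_le j hji)).2) (sq_nonneg _)

end Ext

theorem statement4 (p kbar s : ℕ)
    (Abar E : Matrix (Fin p) (Fin p) ℝ)
    (hAbar : Abar.IsHermitian) (hE : E.IsHermitian)
    (lam dlam : ℝ) (i0 : Fin p)
    (hi0 : hAbar.eigenvalues i0 = lam)
    (hlam_pos : 0 < lam) (hdlam_pos : 0 < dlam)
    (hgap_le : ∀ j, j ≠ i0 → |hAbar.eigenvalues j| ≤ lam - dlam)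
    (hgap_eq : ∃ j, j ≠ i0 ∧ |hAbar.eigenvalues j| = lam - dlam)
    (xbar : Fin p → ℝ)
    (hxbar_eig : Abar.mulVec xbar = lam • xbar)
    (hxbar_norm : nrm2 xbar = 1)
    (hxbar_supp : (supp xbar).card = kbar)
    (F : Finset (Fin p)) (hFsupp : supp xbar ⊆ F) (hFcard : F.card = s) :
    lam - rhoRes E s ≤ (eigList ((hAbar.add hE).submatrix (Subtype.val : {i // i ∈ F} → Fin p))).headI ∧
      ∀ r ∈ (eigList ((hAbar.add hE).submatrix (Subtype.val : {i // i ∈ F} → Fin p))).tail,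
        |r| ≤ lam - dlam + rhoRes E s := by
  classical
  have hxnorm : ∑ k, xbar k ^ 2 = 1 := by
    have h0 : (0:ℝ) ≤ ∑ k, xbar k ^ 2 := Finset.sum_nonneg fun k _ => sq_nonneg _
    have h1 : Real.sqrt (∑ k, xbar k ^ 2) = 1 := hxbar_norm
    nlinarith [Real.sq_sqrt h0, h1]
  set hB := (hAbar.add hE).submatrix (Subtype.val : {i // i ∈ F} → Fin p) with hhB
  have hxzero : ∀ k, k ∉ F → xbar k = 0 := by
    intro k hk
    by_contra h
    exact hk (hFsupp (by simp [supp, h]))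
  set v : {i // i ∈ F} → ℝ := fun i => xbar i.val with hv
  have hextv : extF F v = xbar := by
    funext k
    by_cases hk : k ∈ F
    · simp [extF, hk, hv]
    · simp [extF, hk, hxzero k hk]
  have hvnorm : ∑ i, v i ^ 2 = 1 := by
    have h := sum_ext_mul F v v
    rw [hextv] at h
    have h2 : ∑ i, v i ^ 2 = ∑ i, v i * v i := by
      exact Finset.sum_congr rfl fun i _ => sq (v i) ▸ (pow_two (v i))
    rw [h2, ← h]
    simpa [pow_two] using hxnorm
  have hEsub : (E.submatrix (Subtype.val : {i // i ∈ F} → Fin p) Subtype.val).IsHermitian :=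
    hE.submatrix _
  have hρ : specNorm (E.submatrix (Subtype.val : {i // i ∈ F} → Fin p) Subtype.val)
      ≤ rhoRes E s := specNorm_subm_le_rhoRes F E s hFcard
  have hlamdlam : 0 ≤ lam - dlam := by
    obtain ⟨j, hj, he⟩ := hgap_eq
    rw [← he]; exact abs_nonneg _
  have hsplit : ∀ w : {i // i ∈ F} → ℝ,
      ∑ i, w i * ((Abar + E).submatrix (Subtype.val : {i // i ∈ F} → Fin p) Subtype.val).mulVec w i
        = (∑ k, extF F w k * Abar.mulVec (extF F w) k)
          + ∑ i, w i * (E.submatrix (Subtype.val : {i // i ∈ F} → Fin p) Subtype.val).mulVec w i := by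
    intro w
    rw [quad_subm F (Abar + E) w, quad_subm F E w]
    have he : ∀ k, extF F w k * (Abar + E).mulVec (extF F w) k
        = extF F w k * Abar.mulVec (extF F w) k + extF F w k * E.mulVec (extF F w) k := by
      intro k
      rw [Matrix.add_mulVec, Pi.add_apply, mul_add]
    simp_rw [he, Finset.sum_add_distrib]
  constructor
  · -- Part 1
    have h1 : ∑ k, xbar k * Abar.mulVec xbar k = lam := by
      rw [hxbar_eig]
      have he : ∀ k, xbar k * (lam • xbar) k = lam * xbar k ^ 2 := by
        intro k; simp [Pi.smul_apply, smul_eq_mul]; ring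
      simp_rw [he]
      rw [← Finset.mul_sum, hxnorm, mul_one]
    have h2 := abs_quad_le hEsub v
    rw [hvnorm, mul_one] at h2
    obtain ⟨j, hj⟩ := exists_eig_ge hB v hvnorm
    have hquad := hsplit v
    rw [hextv] at hquad
    have hmem : hB.eigenvalues j ∈ eigList hB := (mem_eigList hB).mpr ⟨j, rfl⟩
    have hle := le_headI hB hmem
    have := (abs_le.mp h2).1
    rw [hquad, h1] at hj
    linarith
  · -- Part 2
    intro r hr
    obtain ⟨i, j, hij, hi, hj⟩ := tail_pair hB hr
    have hrle : r ≤ (eigList hB).headI := le_headI hB (List.mem_of_mem_tail hr)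
    -- Upper bound
    obtain ⟨w, hw1, hw2, hw3⟩ := exists_orth_combo hB i j hij v
    have hrmin : r ≤ min (hB.eigenvalues i) (hB.eigenvalues j) := by
      rw [hi, hj]; exact le_min hrle le_rfl
    have hub : r ≤ lam - dlam + rhoRes E s := by
      have hquad := hsplit w
      have horthx : ∑ k, extF F w k * xbar k = 0 := by
        rw [← hextv, sum_ext_mul F w v]
        exact hw2
      have hext2 : ∑ k, extF F w k ^ 2 = 1 := by
        have h := sum_ext_mul F w w
        have h2 : ∑ k, extF F w k ^ 2 = ∑ k, extF F w k * extF F w k :=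
          Finset.sum_congr rfl fun k _ => pow_two _
        rw [h2, h]
        simpa [pow_two] using hw1
      have hk1 := key_orth hAbar hdlam_pos hgap_le hxbar_eig hxnorm (extF F w) horthx
      rw [hext2, mul_one] at hk1
      have hk2 := abs_quad_le hEsub w
      rw [hw1, mul_one] at hk2
      have hk2' := (abs_le.mp hk2).2
      calc r ≤ min (hB.eigenvalues i) (hB.eigenvalues j) := hrmin
        _ ≤ ∑ k, w k * ((Abar + E).submatrix (Subtype.val : {i // i ∈ F} → Fin p) Subtype.val).mulVec w k := hw3
        _ = (∑ k, extF F w k * Abar.mulVec (extF F w) k)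
            + ∑ i', w i' * (E.submatrix (Subtype.val : {i // i ∈ F} → Fin p) Subtype.val).mulVec w i' := hquad
        _ ≤ (lam - dlam) + rhoRes E s := by linarith
    -- Lower bound
    have hlb : -(lam - dlam + rhoRes E s) ≤ r := by
      rw [← hj]
      set u : {i // i ∈ F} → ℝ := ⇑(hB.eigenvectorBasis j) with hu
      have horth := hB.eigenvectorBasis.orthonormal
      rw [orthonormal_iff_ite] at horth
      have hunorm : ∑ i', u i' ^ 2 = 1 := by
        have := horth j j
        rw [inner_pi] at this
        simp only [if_pos rfl] at this
        have h2 : ∑ i', u i' ^ 2 = ∑ i', u i' * u i' :=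
          Finset.sum_congr rfl fun k _ => pow_two _
        rw [h2]; exact this
      have hBu : ((Abar + E).submatrix (Subtype.val : {i // i ∈ F} → Fin p) Subtype.val).mulVec u
          = fun k => hB.eigenvalues j * u k := by
        funext k
        have h2 := congrFun (hB.mulVec_eigenvectorBasis j) k
        simpa using h2
      have hquadu : ∑ i', u i' * ((Abar + E).submatrix (Subtype.val : {i // i ∈ F} → Fin p) Subtype.val).mulVec u i'
          = hB.eigenvalues j := by
        rw [hBu]
        have he : ∀ k, u k * (hB.eigenvalues j * u k) = hB.eigenvalues j * u k ^ 2 := by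
          intro k; ring
        simp_rw [he]
        rw [← Finset.mul_sum, hunorm, mul_one]
      have hquad := hsplit u
      rw [hquadu] at hquad
      have hext2 : ∑ k, extF F u k ^ 2 = 1 := by
        have h := sum_ext_mul F u u
        have h2 : ∑ k, extF F u k ^ 2 = ∑ k, extF F u k * extF F u k :=
          Finset.sum_congr rfl fun k _ => pow_two _
        rw [h2, h]
        have h3 : ∑ i', u i' * u i' = ∑ i', u i' ^ 2 :=
          Finset.sum_congr rfl fun k _ => (pow_two _).symm
        rw [h3, hunorm]
      have hAbound : ∀ jj, -(lam - dlam) ≤ hAbar.eigenvalues jj := by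
        intro jj
        by_cases hj0 : jj = i0
        · rw [hj0, hi0]; linarith
        · exact (abs_le.mp (hgap_le jj hj0)).1
      have hga := quad_ge hAbar (-(lam - dlam)) hAbound (extF F u)
      rw [hext2, mul_one] at hga
      have hk2 := abs_quad_le hEsub u
      rw [hunorm, mul_one] at hk2
      have hk2' := (abs_le.mp hk2).1
      linarith
    rw [abs_le]
    exact ⟨hlb, hub⟩

end TPaper
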